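/- arXiv:math/9902048 — 2 statements merged into one kernel-verified Lean document; each statement's English description precedes it below -/
import Mathlib

section
/- Let H be an elementary abelian 2-group of rank n with generating set z₁,…,z_n. Then the set L = {[z_{i₁},…,z_{i_s}, z_{i₁}⋯z_{i_s}] : 2 ≤ s ≤ n, 1 ≤ i₁ < ⋯ < i_s ≤ n} is a basis of 𝔹_H: it generates 𝔹_H, each of its elements has order two, and the only relations among its elements are 2α = 0. In particular 𝔹_H ≅ (ℤ/2ℤ)^{2^n − 1 − n}. -/
namespace SingOrbit

variable (G : Type*) [Group G]

/-- The map from conjugacy classes to the abelianization. -/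
def classAb : ConjClasses G → Additive (Abelianization G) :=
  Quotient.lift (fun g : G => Additive.ofMul (Abelianization.of g)) <| by
    intro a b hab
    obtain ⟨c, hc⟩ := isConj_iff.mp (hab : IsConj a b)
    subst hc
    show Additive.ofMul (Abelianization.of a) = Additive.ofMul (Abelianization.of (c * a * c⁻¹))
    congr 1
    rw [map_mul, map_mul, map_inv, mul_comm (Abelianization.of c) (Abelianization.of a),
      mul_inv_cancel_right]

/-- Nontrivial conjugacy classes. -/
def NCC := {c : ConjClasses G // c ≠ 1}

/-- The homomorphism `φ` from the free abelian group on the nontrivial conjugacy classes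
to the abelianization, sending a conjugacy class to the image of any representative. -/
noncomputable def phi : FreeAbelianGroup (NCC G) →+ Additive (Abelianization G) :=
  FreeAbelianGroup.lift fun c => classAb G c.1

/-- The basis element of the free abelian group corresponding to a conjugacy class
(`0` for the trivial class). -/
noncomputable def clsC (c : ConjClasses G) : FreeAbelianGroup (NCC G) :=
  letI := Classical.dec (c = 1)
  if h : c = 1 then 0 else FreeAbelianGroup.of ⟨c, h⟩

/-- The basis element corresponding to the conjugacy class of a group element. -/
noncomputable def clsF (x : G) : FreeAbelianGroup (NCC G) := clsC G (ConjClasses.mk x)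

/-- The subgroup generated by the elements `x̂ + x̂⁻¹`. -/
noncomputable def NSub : AddSubgroup (FreeAbelianGroup (NCC G)) :=
  AddSubgroup.closure {a | ∃ x : G, a = clsF G x + clsF G x⁻¹}

/-- The group `𝔹_G` of singular orbit data: `(ker φ) / N`. -/
noncomputable def SOD := (phi G).ker ⧸ ((NSub G).addSubgroupOf (phi G).ker)

noncomputable instance : AddCommGroup (SOD G) :=
  inferInstanceAs (AddCommGroup ((phi G).ker ⧸ ((NSub G).addSubgroupOf (phi G).ker)))

variable {G}

lemma classAb_mk (x : G) :
    classAb G (ConjClasses.mk x) = Additive.ofMul (Abelianization.of x) := rfl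

lemma mk_eq_one_iff {x : G} : ConjClasses.mk x = 1 ↔ x = 1 := by
  rw [ConjClasses.one_eq_mk_one, ConjClasses.mk_eq_mk_iff_isConj, isConj_one_left]

lemma phi_of (c : NCC G) : phi G (FreeAbelianGroup.of c) = classAb G c.1 :=
  FreeAbelianGroup.lift_apply_of _ _

lemma phi_clsF (x : G) : phi G (clsF G x) = Additive.ofMul (Abelianization.of x) := by
  rw [clsF, clsC]
  split_ifs with h
  · have hx : x = 1 := mk_eq_one_iff.mp h
    subst hx
    simp
  · exact phi_of (G := G) ⟨ConjClasses.mk x, h⟩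

/-- The element of the free abelian group associated to a list of group elements. -/
noncomputable def sumF (l : List G) : FreeAbelianGroup (NCC G) := (l.map (clsF G)).sum

lemma sumF_nil : sumF ([] : List G) = 0 := rfl

lemma sumF_cons (a : G) (t : List G) : sumF (a :: t) = clsF G a + sumF t := by
  simp [sumF]

lemma phi_sumF (l : List G) :
    phi G (sumF l) = Additive.ofMul (Abelianization.of l.prod) := by
  induction l with
  | nil => simp [sumF_nil]
  | cons a t ih =>
    rw [sumF_cons, map_add, phi_clsF, ih, List.prod_cons, map_mul, ofMul_mul]

lemma abOf_eq_one_iff {x : G} : Abelianization.of x = 1 ↔ x ∈ commutator G :=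
  QuotientGroup.eq_one_iff x

lemma sumF_mem_ker {l : List G} (h : l.prod ∈ commutator G) : sumF l ∈ (phi G).ker := by
  rw [AddMonoidHom.mem_ker, phi_sumF, abOf_eq_one_iff.mpr h]
  rfl

/-- The singular orbit datum `[x̂₁, …, x̂_q]` associated to a list of group elements whose
product lies in the commutator subgroup. -/
noncomputable def data (l : List G) (h : l.prod ∈ commutator G) : SOD G :=
  (QuotientAddGroup.mk ⟨sumF l, sumF_mem_ker h⟩ : SOD G)

lemma sq_list_mem {H : Type*} [CommGroup H] (hH : ∀ x : H, x ^ 2 = 1) (l : List H) :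
    ((l ++ [l.prod]).prod ∈ commutator H) := by
  have h1 : (l ++ [l.prod]).prod = 1 := by
    rw [List.prod_append, List.prod_singleton, ← pow_two]
    exact hH _
  rw [h1]
  exact Subgroup.one_mem _

section Aux

open scoped symmDiff

variable {H : Type*} [CommGroup H] {n : ℕ} {z : Fin n → H}

lemma inv_eq_self (hH : ∀ x : H, x ^ 2 = 1) (a : H) : a⁻¹ = a :=
  inv_eq_of_mul_eq_one_right (by rw [← pow_two]; exact hH a)

lemma zmod2_add_self : ∀ u : ZMod 2, u + u = 0 := by decide

/-- The product map from subsets of indices to `H`. -/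
def Pmap (z : Fin n → H) (S : Finset (Fin n)) : H := S.prod z

lemma Pmap_empty : Pmap z ∅ = 1 := Finset.prod_empty

lemma Pmap_singleton (i : Fin n) : Pmap z {i} = z i := Finset.prod_singleton z i

lemma Pmap_mul (hH : ∀ x : H, x ^ 2 = 1) (S S' : Finset (Fin n)) :
    Pmap z S * Pmap z S' = Pmap z (S ∆ S') := by
  classical
  have h3 : (∏ i ∈ S ∩ S', z i) * (∏ i ∈ S ∩ S', z i) = 1 := by
    rw [← Finset.prod_mul_distrib]
    exact Finset.prod_eq_one fun i _ => by rw [← pow_two]; exact hH (z i)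
  calc Pmap z S * Pmap z S'
      = (∏ i ∈ S ∪ S', z i) * ∏ i ∈ S ∩ S', z i := Finset.prod_union_inter.symm
    _ = ((∏ i ∈ S ∆ S', z i) * ∏ i ∈ S ∩ S', z i) * ∏ i ∈ S ∩ S', z i := by
        have h4 : S ∪ S' = (S ∆ S') ∪ (S ∩ S') := by
          ext i
          simp only [Finset.mem_symmDiff, Finset.mem_union, Finset.mem_inter]
          tauto
        have h5 : Disjoint (S ∆ S') (S ∩ S') := by
          rw [Finset.disjoint_left]
          intro i hi hi2
          simp only [Finset.mem_symmDiff, Finset.mem_inter] at hi hi2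
          tauto
        rw [h4, Finset.prod_union h5]
    _ = (∏ i ∈ S ∆ S', z i) * ((∏ i ∈ S ∩ S', z i) * ∏ i ∈ S ∩ S', z i) := mul_assoc _ _ _
    _ = Pmap z (S ∆ S') := by rw [h3, mul_one]; rfl

lemma Pmap_bijective (hH : ∀ x : H, x ^ 2 = 1)
    (hgen : Subgroup.closure (Set.range z) = (⊤ : Subgroup H))
    (hcard : Nat.card H = 2 ^ n) : Function.Bijective (Pmap z) := by
  have hfin : Finite H := Nat.finite_of_card_ne_zero
    (by rw [hcard]; exact (pow_pos (by norm_num) n).ne')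
  cases nonempty_fintype H
  classical
  have hsurj : Function.Surjective (Pmap z) := by
    let R : Subgroup H :=
      { carrier := Set.range (Pmap z)
        one_mem' := ⟨∅, Pmap_empty⟩
        mul_mem' := by rintro a b ⟨S, rfl⟩ ⟨S', rfl⟩; exact ⟨S ∆ S', (Pmap_mul hH S S').symm⟩
        inv_mem' := by rintro a ⟨S, rfl⟩; rw [inv_eq_self hH]; exact ⟨S, rfl⟩ }
    intro h
    have hle : (⊤ : Subgroup H) ≤ R := by
      rw [← hgen]
      refine (Subgroup.closure_le R).mpr ?_
      rintro a ⟨i, rfl⟩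
      exact ⟨{i}, Pmap_singleton i⟩
    exact hle trivial
  refine ⟨?_, hsurj⟩
  have hcards : Fintype.card (Finset (Fin n)) = Fintype.card H := by
    rw [Fintype.card_finset, Fintype.card_fin, ← Nat.card_eq_fintype_card, hcard]
  exact ((Fintype.bijective_iff_surjective_and_card _).mpr ⟨hsurj, hcards⟩).1

lemma Pmap_ne_one (hbij : Function.Bijective (Pmap z)) {S : Finset (Fin n)} (hS : S ≠ ∅) :
    Pmap z S ≠ 1 := by
  intro h
  exact hS (hbij.1 (h.trans Pmap_empty.symm))

lemma mkP_ne_one (hbij : Function.Bijective (Pmap z)) {S : Finset (Fin n)} (hS : S ≠ ∅) :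
    ConjClasses.mk (Pmap z S) ≠ 1 := fun h => Pmap_ne_one hbij hS (mk_eq_one_iff.mp h)

open Classical in
/-- The coordinate homomorphism extracting the mod-2 coefficient at a conjugacy class. -/
noncomputable def coordC (c0 : ConjClasses H) : FreeAbelianGroup (NCC H) →+ ZMod 2 :=
  FreeAbelianGroup.lift fun c : NCC H => if c.1 = c0 then 1 else 0

open Classical in
lemma coordC_of (c0 : ConjClasses H) (c : NCC H) :
    coordC c0 (FreeAbelianGroup.of c) = if c.1 = c0 then 1 else 0 :=
  FreeAbelianGroup.lift_apply_of _ _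

lemma coordC_coeff (c0 : NCC H) (x : FreeAbelianGroup (NCC H)) :
    coordC c0.1 x = ((FreeAbelianGroup.toFinsupp x) c0 : ZMod 2) := by
  classical
  have h : coordC c0.1 =
      ((Int.castAddHom (ZMod 2)).comp (Finsupp.applyAddHom c0)).comp
        FreeAbelianGroup.toFinsupp := by
    ext c
    rw [AddMonoidHom.comp_apply, AddMonoidHom.comp_apply, FreeAbelianGroup.toFinsupp_of,
      coordC_of]
    simp only [Finsupp.applyAddHom_apply, Finsupp.single_apply, Int.coe_castAddHom]
    by_cases hc : c = c0
    · subst hc; simp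
    · rw [if_neg (fun hh => hc (Subtype.ext hh)), if_neg (fun hh : c = c0 => hc hh), Int.cast_zero]
  rw [h]; rfl

lemma clsF_one : clsF H (1 : H) = 0 := by
  rw [clsF, clsC, dif_pos (mk_eq_one_iff.mpr rfl)]

lemma clsF_eq_of (a : H) (ha : a ≠ 1) :
    clsF H a = FreeAbelianGroup.of ⟨ConjClasses.mk a, fun h => ha (mk_eq_one_iff.mp h)⟩ := by
  rw [clsF, clsC, dif_neg (fun h => ha (mk_eq_one_iff.mp h))]

lemma coordC_clsF_eq (a : H) (ha : a ≠ 1) : coordC (ConjClasses.mk a) (clsF H a) = 1 := by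
  classical
  rw [clsF_eq_of a ha]; exact (coordC_of _ _).trans (if_pos rfl)

lemma coordC_clsF_ne (a : H) (c0 : ConjClasses H) (hne : ConjClasses.mk a ≠ c0) :
    coordC c0 (clsF H a) = 0 := by
  classical
  by_cases ha : a = 1
  · subst ha; rw [clsF_one, map_zero]
  · rw [clsF_eq_of a ha]; exact (coordC_of _ _).trans (if_neg hne)

open Classical in
/-- The vector homomorphism recording mod-2 coefficients at classes of products over
subsets of size at least two. -/
noncomputable def vecHom (z : Fin n → H) :
    FreeAbelianGroup (NCC H) →+ ({T : Finset (Fin n) // 2 ≤ T.card} → ZMod 2) :=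
  FreeAbelianGroup.lift fun c : NCC H =>
    fun T => if c.1 = ConjClasses.mk (Pmap z T.1) then 1 else 0

lemma vecHom_apply (x : FreeAbelianGroup (NCC H)) (T : {T : Finset (Fin n) // 2 ≤ T.card}) :
    vecHom z x T = coordC (ConjClasses.mk (Pmap z T.1)) x := by
  classical
  have h : (Pi.evalAddMonoidHom (fun _ : {T : Finset (Fin n) // 2 ≤ T.card} => ZMod 2) T).comp
      (vecHom z) = coordC (ConjClasses.mk (Pmap z T.1)) := by
    ext c
    rw [AddMonoidHom.comp_apply]
    show vecHom z (FreeAbelianGroup.of c) T = _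
    rw [vecHom, FreeAbelianGroup.lift_apply_of, coordC_of]
  exact DFunLike.congr_fun h x

end Aux
section Aux2

variable {H : Type*} [CommGroup H] {n : ℕ} {z : Fin n → H}

lemma sumF_append (l1 l2 : List H) : sumF (l1 ++ l2) = sumF l1 + sumF l2 := by
  simp [sumF]

lemma sort_map_prod (s : Finset (Fin n)) :
    ((s.sort (· ≤ ·)).map z).prod = Pmap z s := by
  have hperm : List.Perm ((s.sort (· ≤ ·)).map z) (s.toList.map z) :=
    (Finset.sort_perm_toList (s := s) (r := (· ≤ ·))).map z
  rw [hperm.prod_eq, Pmap, Finset.prod_map_toList]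

lemma sumF_singleton (a : H) : sumF [a] = clsF H a := by
  simp [sumF]

lemma vecHom_data (hbij : Function.Bijective (Pmap z))
    (T : {T : Finset (Fin n) // 2 ≤ T.card}) :
    vecHom z (sumF (((T.1.sort (· ≤ ·)).map z) ++ [((T.1.sort (· ≤ ·)).map z).prod]))
      = Pi.single T 1 := by
  have hTne : T.1 ≠ ∅ := by
    intro h
    have := T.2
    rw [h] at this
    simp at this
  rw [sumF_append, map_add]
  have h1 : vecHom z (sumF ((T.1.sort (· ≤ ·)).map z)) = 0 := by
    generalize T.1.sort (· ≤ ·) = l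
    induction l with
    | nil => rw [List.map_nil, sumF_nil, map_zero]
    | cons i t ih =>
      rw [List.map_cons, sumF_cons, map_add, ih, add_zero]
      funext T'
      rw [vecHom_apply, coordC_clsF_ne]
      · rfl
      · intro h
        have h2 : z i = Pmap z T'.1 := ConjClasses.mk_injective h
        rw [← Pmap_singleton (z := z) i] at h2
        have h3 := hbij.1 h2
        have := T'.2
        rw [← h3] at this
        simp at this
  rw [h1, zero_add, sort_map_prod, sumF_singleton]
  funext T'
  rw [vecHom_apply]
  by_cases h : T' = T
  · subst h
    rw [coordC_clsF_eq _ (Pmap_ne_one hbij hTne), Pi.single_eq_same]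
  · rw [Pi.single_eq_of_ne h]
    rw [coordC_clsF_ne]
    intro he
    exact h (Subtype.ext (hbij.1 (ConjClasses.mk_injective he)).symm)

lemma two_smul_clsF_mem (hH : ∀ x : H, x ^ 2 = 1) (a : H) :
    clsF H a + clsF H a ∈ NSub H := by
  refine AddSubgroup.subset_closure ⟨a, ?_⟩
  rw [inv_eq_self hH]

lemma vecHom_NSub (hH : ∀ x : H, x ^ 2 = 1) {x : FreeAbelianGroup (NCC H)}
    (hx : x ∈ NSub H) : vecHom z x = 0 := by
  have hle : NSub H ≤ (vecHom z).ker := by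
    refine (AddSubgroup.closure_le _).mpr ?_
    rintro b ⟨a, rfl⟩
    rw [SetLike.mem_coe, AddMonoidHom.mem_ker, inv_eq_self hH, map_add]
    funext T
    exact zmod2_add_self _
  exact hle hx

lemma toFinsupp_injective :
    Function.Injective (FreeAbelianGroup.toFinsupp (X := NCC H)) := fun a b h => by
  rw [← Finsupp.toFreeAbelianGroup_toFinsupp a, ← Finsupp.toFreeAbelianGroup_toFinsupp b, h]

lemma even_mem (hH : ∀ x : H, x ^ 2 = 1) {x : FreeAbelianGroup (NCC H)}
    (he : ∀ c, (2 : ℤ) ∣ FreeAbelianGroup.toFinsupp x c) : x ∈ NSub H := by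
  classical
  have h2 : ∀ y : FreeAbelianGroup (NCC H), (2 : ℤ) • y ∈ NSub H := by
    intro y
    refine FreeAbelianGroup.induction_on y ?_ ?_ ?_ ?_
    · rw [smul_zero]; exact zero_mem _
    · intro c
      obtain ⟨a, ha⟩ := ConjClasses.exists_rep c.1
      have ha1 : a ≠ 1 := fun h => c.2 (by rw [← ha, h, ← ConjClasses.one_eq_mk_one])
      have hof : FreeAbelianGroup.of c = clsF H a := by
        rw [clsF_eq_of a ha1]
        congr 1
        exact Subtype.ext ha.symm
      rw [two_zsmul, hof]
      exact two_smul_clsF_mem hH a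
    · intro c hc
      rw [smul_neg]
      exact neg_mem hc
    · intro a b ha hb
      rw [smul_add]
      exact add_mem ha hb
  have hx2 : x = (2 : ℤ) • Finsupp.toFreeAbelianGroup
      (Finsupp.mapRange (· / 2) (Int.zero_ediv 2) (FreeAbelianGroup.toFinsupp x)) := by
    apply toFinsupp_injective
    rw [map_zsmul]
    have hcomp : ∀ f : NCC H →₀ ℤ,
        FreeAbelianGroup.toFinsupp (Finsupp.toFreeAbelianGroup f) = f := fun f => by
      have := DFunLike.congr_fun
        (FreeAbelianGroup.toFinsupp_comp_toFreeAbelianGroup (X := NCC H)) f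
      simpa using this
    rw [hcomp]
    ext c
    rw [Finsupp.smul_apply, Finsupp.mapRange_apply, smul_eq_mul]
    exact (Int.mul_ediv_cancel' (he c)).symm
  rw [hx2]
  exact h2 _

end Aux2
section Aux3

variable {H : Type*} [CommGroup H] {n : ℕ} {z : Fin n → H}

lemma classAb_add_self (hH : ∀ x : H, x ^ 2 = 1) (c : ConjClasses H) :
    classAb H c + classAb H c = 0 := by
  obtain ⟨a, rfl⟩ := ConjClasses.exists_rep c
  rw [classAb_mk, ← ofMul_mul, ← map_mul, ← pow_two, hH, map_one]
  rfl

lemma zsmul_mod_two {A : Type*} [AddCommGroup A] (k : ℤ) (y : A) (hy : y + y = 0) :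
    k • y = (k % 2) • y := by
  conv_lhs => rw [← Int.mul_ediv_add_emod k 2]
  rw [add_zsmul, mul_comm (2 : ℤ), mul_zsmul, two_zsmul, hy, smul_zero, zero_add]

lemma ker_mem_NSub (hH : ∀ x : H, x ^ 2 = 1) (hbij : Function.Bijective (Pmap z))
    {x : FreeAbelianGroup (NCC H)} (hx : phi H x = 0) (hv : vecHom z x = 0) :
    x ∈ NSub H := by
  classical
  set f := FreeAbelianGroup.toFinsupp x with hf
  -- coefficients at classes of products over big sets are even
  have hbig : ∀ (S : Finset (Fin n)) (hS : 2 ≤ S.card),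
      (2 : ℤ) ∣ f ⟨ConjClasses.mk (Pmap z S),
        mkP_ne_one hbij (fun h => by rw [h] at hS; simp at hS)⟩ := by
    intro S hS
    have h1 : vecHom z x ⟨S, hS⟩ = 0 := by rw [hv]; rfl
    rw [vecHom_apply,
      coordC_coeff ⟨ConjClasses.mk (Pmap z S),
        mkP_ne_one hbij (fun h => by rw [h] at hS; simp at hS)⟩ x] at h1
    exact (ZMod.intCast_zmod_eq_zero_iff_dvd _ 2).mp h1
  -- the singleton classes
  have hzP : ∀ i : Fin n, z i = Pmap z {i} := fun i => (Pmap_singleton i).symm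
  have hzne : ∀ i : Fin n, ConjClasses.mk (z i) ≠ 1 := fun i => by
    rw [hzP i]; exact mkP_ne_one hbij (by simp)
  set clsZ : Fin n → NCC H := fun i => ⟨ConjClasses.mk (z i), hzne i⟩ with hclsZ
  have hclsZinj : Function.Injective clsZ := by
    intro i j h
    have h1 : z i = z j := ConjClasses.mk_injective (Subtype.ext_iff.mp h)
    have h2 : ({i} : Finset (Fin n)) = {j} := hbij.1 (by rw [← hzP i, ← hzP j]; exact h1)
    exact Finset.singleton_injective h2
  set I : Finset (Fin n) := Finset.univ.filter (fun i => f (clsZ i) % 2 = 1) with hI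
  -- phi x as a sum over I
  have hphi2 : phi H x = ∑ i ∈ I, Additive.ofMul (Abelianization.of (z i)) := by
    have hx' : x = Finsupp.toFreeAbelianGroup f := (Finsupp.toFreeAbelianGroup_toFinsupp x).symm
    have hsum : Finsupp.toFreeAbelianGroup f = f.sum fun c k => k • FreeAbelianGroup.of c := by
      rw [Finsupp.toFreeAbelianGroup, Finsupp.liftAddHom_apply]
      rfl
    have hvan2 : ∀ c ∈ f.support ∪ Finset.univ.image clsZ,
        c ∉ Finset.univ.image clsZ → (f c % 2) • classAb H c.1 = 0 := by
      intro c _ hcim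
      obtain ⟨a, ha⟩ := ConjClasses.exists_rep c.1
      have hane : a ≠ 1 := fun h => c.2 (by rw [← ha, h, ← ConjClasses.one_eq_mk_one])
      obtain ⟨S, hS⟩ := hbij.2 a
      have hSne : S ≠ ∅ := by
        rintro rfl
        exact hane (by rw [← hS, Pmap_empty])
      by_cases h2c : 2 ≤ S.card
      · have hceq : c = ⟨ConjClasses.mk (Pmap z S),
            mkP_ne_one hbij (fun h => by rw [h] at h2c; simp at h2c)⟩ :=
          Subtype.ext (ha.symm.trans (congrArg ConjClasses.mk hS.symm))
        have := hbig S h2c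
        rw [← hceq] at this
        rw [Int.emod_eq_zero_of_dvd this, zero_smul]
      · exfalso
        apply hcim
        have hc1 : S.card = 1 := by
          have h0 : S.card ≠ 0 := fun h => hSne (Finset.card_eq_zero.mp h)
          omega
        obtain ⟨i, rfl⟩ := Finset.card_eq_one.mp hc1
        have hceq : c = clsZ i := Subtype.ext (ha.symm.trans (congrArg ConjClasses.mk (hS.symm.trans (hzP i).symm)))
        rw [hceq]
        exact Finset.mem_image_of_mem clsZ (Finset.mem_univ i)
    calc phi H x = f.sum fun c k => k • classAb H c.1 := by
          conv_lhs => rw [hx', hsum]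
          rw [map_finsuppSum]
          exact Finsupp.sum_congr fun (c : NCC H) _ => by rw [map_zsmul, phi_of]
      _ = f.sum fun c k => (k % 2) • classAb H c.1 :=
          Finsupp.sum_congr fun (c : NCC H) _ => zsmul_mod_two _ _ (classAb_add_self hH c.1)
      _ = ∑ c ∈ f.support, (f c % 2) • classAb H c.1 := rfl
      _ = ∑ c ∈ f.support ∪ Finset.univ.image clsZ, (f c % 2) • classAb H c.1 :=
          Finset.sum_subset Finset.subset_union_left (fun c _ hc => by
            rw [Finsupp.notMem_support_iff.mp hc, Int.zero_emod, zero_smul])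
      _ = ∑ c ∈ Finset.univ.image clsZ, (f c % 2) • classAb H c.1 :=
          (Finset.sum_subset Finset.subset_union_right hvan2).symm
      _ = ∑ i ∈ Finset.univ, (f (clsZ i) % 2) • classAb H (clsZ i).1 :=
          Finset.sum_image (fun i _ j _ h => hclsZinj h)
      _ = ∑ i ∈ Finset.univ,
            (if i ∈ I then Additive.ofMul (Abelianization.of (z i)) else 0) := by
          refine Finset.sum_congr rfl (fun i _ => ?_)
          by_cases hi : i ∈ I
          · rw [if_pos hi, (Finset.mem_filter.mp hi).2, one_smul]
            rfl
          · have h0 : f (clsZ i) % 2 = 0 := by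
              rcases Int.emod_two_eq_zero_or_one (f (clsZ i)) with h | h
              · exact h
              · exact absurd (Finset.mem_filter.mpr ⟨Finset.mem_univ i, h⟩) hi
            rw [if_neg hi, h0, zero_smul]
      _ = ∑ i ∈ Finset.univ.filter (· ∈ I), Additive.ofMul (Abelianization.of (z i)) :=
          (Finset.sum_filter _ _).symm
      _ = ∑ i ∈ I, Additive.ofMul (Abelianization.of (z i)) := by
          rw [Finset.filter_univ_mem]
  -- the product over I is trivial
  have hPI : Pmap z I = 1 := by
    apply Abelianization.equivOfComm.injective
    rw [map_one]
    show Abelianization.of (Pmap z I) = 1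
    have h1 : Additive.ofMul (Abelianization.of (Pmap z I)) = 0 := by
      rw [Pmap, map_prod, ofMul_prod, ← hphi2, hx]
    exact ofMul_eq_zero.mp h1
  have hIe : I = ∅ := hbij.1 (by rw [hPI, Pmap_empty])
  -- conclude : all coefficients are even
  apply even_mem hH
  intro c
  obtain ⟨a, ha⟩ := ConjClasses.exists_rep c.1
  have hane : a ≠ 1 := fun h => c.2 (by rw [← ha, h, ← ConjClasses.one_eq_mk_one])
  obtain ⟨S, hS⟩ := hbij.2 a
  have hSne : S ≠ ∅ := by
    rintro rfl
    exact hane (by rw [← hS, Pmap_empty])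
  by_cases h2c : 2 ≤ S.card
  · have hceq : c = ⟨ConjClasses.mk (Pmap z S),
        mkP_ne_one hbij (fun h => by rw [h] at h2c; simp at h2c)⟩ :=
      Subtype.ext (ha.symm.trans (congrArg ConjClasses.mk hS.symm))
    rw [hceq]
    exact hbig S h2c
  · have hc1 : S.card = 1 := by
      have h0 : S.card ≠ 0 := fun h => hSne (Finset.card_eq_zero.mp h)
      omega
    obtain ⟨i, rfl⟩ := Finset.card_eq_one.mp hc1
    have hceq : c = clsZ i := Subtype.ext (ha.symm.trans (congrArg ConjClasses.mk (hS.symm.trans (hzP i).symm)))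
    rw [hceq]
    have hni : i ∉ I := by rw [hIe]; exact Finset.notMem_empty i
    have h0 : f (clsZ i) % 2 = 0 := by
      rcases Int.emod_two_eq_zero_or_one (f (clsZ i)) with h | h
      · exact h
      · exact absurd (Finset.mem_filter.mpr ⟨Finset.mem_univ i, h⟩) hni
    exact Int.dvd_of_emod_eq_zero h0

end Aux3
section Aux4

variable {H : Type*} [CommGroup H] {n : ℕ} {z : Fin n → H}

theorem key_equiv (hH : ∀ x : H, x ^ 2 = 1)
    (hgen : Subgroup.closure (Set.range z) = (⊤ : Subgroup H))
    (hcard : Nat.card H = 2 ^ n) :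
    ∃ Φ : SOD H ≃+ ({T : Finset (Fin n) // 2 ≤ T.card} → ZMod 2),
      ∀ (l : List H) (hl : l.prod ∈ commutator H),
        Φ (data l hl) = vecHom z (sumF l) := by
  have hbij := Pmap_bijective hH hgen hcard
  have hcond : ∀ y ∈ (NSub H).addSubgroupOf (phi H).ker,
      ((vecHom z).comp (AddSubgroup.subtype (phi H).ker)) y = 0 := fun y hy =>
    vecHom_NSub hH ((AddSubgroup.mem_addSubgroupOf).mp hy)
  let Q : SOD H →+ ({T : Finset (Fin n) // 2 ≤ T.card} → ZMod 2) :=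
    QuotientAddGroup.lift _ ((vecHom z).comp (AddSubgroup.subtype (phi H).ker)) hcond
  have hQmk : ∀ y : (phi H).ker, Q (QuotientAddGroup.mk y) = vecHom z y.1 := fun y => rfl
  have hinj : Function.Injective Q := by
    rw [injective_iff_map_eq_zero]
    intro a ha
    obtain ⟨y, rfl⟩ := QuotientAddGroup.mk_surjective a
    rw [hQmk] at ha
    have h1 : (y : FreeAbelianGroup (NCC H)) ∈ NSub H :=
      ker_mem_NSub hH hbij (AddMonoidHom.mem_ker.mp y.2) ha
    exact (QuotientAddGroup.eq_zero_iff y).mpr ((AddSubgroup.mem_addSubgroupOf).mpr h1)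
  have hsurj : Function.Surjective Q := by
    intro v
    classical
    let wv : {T : Finset (Fin n) // 2 ≤ T.card} → FreeAbelianGroup (NCC H) := fun T =>
      sumF (((T.1.sort (· ≤ ·)).map z) ++ [((T.1.sort (· ≤ ·)).map z).prod])
    have hwmem : ∀ T, wv T ∈ (phi H).ker := fun T => sumF_mem_ker (sq_list_mem hH _)
    let xval : FreeAbelianGroup (NCC H) := ∑ T, (if v T = 1 then wv T else 0)
    have hxmem : xval ∈ (phi H).ker := by
      refine AddSubgroup.sum_mem _ (fun T _ => ?_)
      split_ifs
      · exact hwmem T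
      · exact zero_mem _
    refine ⟨QuotientAddGroup.mk ⟨xval, hxmem⟩, ?_⟩
    rw [hQmk]
    show vecHom z xval = v
    have h1 : vecHom z xval = ∑ T, (if v T = 1 then Pi.single T (1 : ZMod 2) else 0) := by
      rw [map_sum]
      refine Finset.sum_congr rfl (fun T _ => ?_)
      rw [apply_ite (vecHom z), map_zero, vecHom_data hbij]
    rw [h1]
    funext T'
    rw [Finset.sum_apply]
    rw [Finset.sum_eq_single T' (fun T _ hT => ?_) (fun h => absurd (Finset.mem_univ T') h)]
    · by_cases h : v T' = 1
      · rw [if_pos h, Pi.single_eq_same, h]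
      · rw [if_neg h]
        have : v T' = 0 := by
          have h2 : ∀ u : ZMod 2, u = 0 ∨ u = 1 := by decide
          rcases h2 (v T') with h3 | h3
          · exact h3
          · exact absurd h3 h
        rw [this]
        rfl
    · split_ifs
      · exact Pi.single_eq_of_ne (Ne.symm hT) 1
      · rfl
  refine ⟨AddEquiv.ofBijective Q ⟨hinj, hsurj⟩, fun l hl => ?_⟩
  show Q (data l hl) = vecHom z (sumF l)
  rw [data]
  exact hQmk _

end Aux4
lemma card_iota (n : ℕ) :
    Fintype.card {T : Finset (Fin n) // 2 ≤ T.card} = 2 ^ n - 1 - n := by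
  classical
  have h0 : (Finset.univ.filter (fun T : Finset (Fin n) => T.card = 0)) = {∅} := by
    ext T
    simp [Finset.card_eq_zero]
  have h1 : (Finset.univ.filter (fun T : Finset (Fin n) => T.card = 1)).card = n := by
    have he : (Finset.univ.filter (fun T : Finset (Fin n) => T.card = 1))
        = Finset.univ.image (fun i : Fin n => ({i} : Finset (Fin n))) := by
      ext T
      simp only [Finset.mem_filter, Finset.mem_univ, true_and, Finset.mem_image,
        Finset.card_eq_one]
      constructor
      · rintro ⟨i, h⟩
        exact ⟨i, h.symm⟩
      · rintro ⟨i, h⟩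
        exact ⟨i, h.symm⟩
    rw [he, Finset.card_image_of_injective _ Finset.singleton_injective, Finset.card_univ,
      Fintype.card_fin]
  have hdisj : Disjoint (Finset.univ.filter (fun T : Finset (Fin n) => T.card = 0))
      (Finset.univ.filter (fun T : Finset (Fin n) => T.card = 1)) := by
    rw [Finset.disjoint_left]
    intro T hT hT2
    simp only [Finset.mem_filter] at hT hT2
    omega
  have hneg : (Finset.univ.filter (fun T : Finset (Fin n) => ¬ 2 ≤ T.card)).card = 1 + n := by
    have he : (Finset.univ.filter (fun T : Finset (Fin n) => ¬ 2 ≤ T.card))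
        = Finset.univ.filter (fun T : Finset (Fin n) => T.card = 0)
          ∪ Finset.univ.filter (fun T : Finset (Fin n) => T.card = 1) := by
      rw [← Finset.filter_or]
      apply Finset.filter_congr
      intro T _
      constructor
      · intro h
        omega
      · intro h
        omega
    rw [he, Finset.card_union_of_disjoint hdisj, h0, Finset.card_singleton, h1]
  have hpart := Finset.card_filter_add_card_filter_not
    (s := (Finset.univ : Finset (Finset (Fin n)))) (p := fun T : Finset (Fin n) => 2 ≤ T.card)
  have htot : (Finset.univ : Finset (Finset (Fin n))).card = 2 ^ n := by
    rw [Finset.card_univ, Fintype.card_finset, Fintype.card_fin]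
  rw [Fintype.card_subtype]
  omega


/-- for an elementary abelian 2-group `H` of rank `n` with generators
`z₁, …, z_n`, the elements `[z_{i₁}, …, z_{i_s}, z_{i₁}⋯z_{i_s}]` for subsets of size
`≥ 2` form a basis of `𝔹_H`: they generate, each has order two, the only relations are
`2α = 0`, and `𝔹_H ≅ (ℤ/2ℤ)^(2ⁿ - 1 - n)`. -/
theorem stmt12 (H : Type*) [CommGroup H] (n : ℕ) (z : Fin n → H)
    (hH : ∀ x : H, x ^ 2 = 1)
    (hgen : Subgroup.closure (Set.range z) = (⊤ : Subgroup H))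
    (hcard : Nat.card H = 2 ^ n)
    (b : {T : Finset (Fin n) // 2 ≤ T.card} → SOD H)
    (hb : ∀ T : {T : Finset (Fin n) // 2 ≤ T.card},
      b T = data (((T.1.sort (· ≤ ·)).map z) ++ [((T.1.sort (· ≤ ·)).map z).prod])
        (sq_list_mem hH _)) :
    (∀ T, addOrderOf (b T) = 2) ∧
    AddSubgroup.closure (Set.range b) = ⊤ ∧
    (∀ e : {T : Finset (Fin n) // 2 ≤ T.card} → ℤ, (∀ T, e T = 0 ∨ e T = 1) →
      ∑ T, e T • b T = 0 → ∀ T, e T = 0) ∧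
    Nonempty (SOD H ≃+ (Fin (2 ^ n - 1 - n) → ZMod 2)) := by
  obtain ⟨Φ, hΦ⟩ := key_equiv (z := z) hH hgen hcard
  have hbij := Pmap_bijective hH hgen hcard
  have hbT : ∀ T, Φ (b T) = Pi.single T 1 := by
    intro T
    rw [hb T, hΦ]
    exact vecHom_data hbij T
  refine ⟨?_, ?_, ?_, ?_⟩
  · intro T
    haveI : Fact (Nat.Prime 2) := ⟨Nat.prime_two⟩
    refine addOrderOf_eq_prime ?_ ?_
    · apply Φ.injective
      rw [map_nsmul, hbT, map_zero, two_smul]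
      funext T'
      exact zmod2_add_self _
    · intro h0
      have h1 := hbT T
      rw [h0, map_zero] at h1
      have h2 := congrFun h1 T
      rw [Pi.single_eq_same] at h2
      have h2' : (0 : ZMod 2) = 1 := h2
      exact zero_ne_one h2'
  · have hmap : AddSubgroup.map Φ.toAddMonoidHom (AddSubgroup.closure (Set.range b)) = ⊤ := by
      rw [AddMonoidHom.map_closure]
      have him : ⇑Φ.toAddMonoidHom '' Set.range b
          = Set.range (fun T => Pi.single T (1 : ZMod 2)) := by
        rw [← Set.range_comp]
        have hfe : ⇑Φ.toAddMonoidHom ∘ b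
            = fun T => (Pi.single T 1 : {T : Finset (Fin n) // 2 ≤ T.card} → ZMod 2) :=
          funext fun T => hbT T
        rw [hfe]
      rw [him, eq_top_iff]
      intro v _
      have hdecv : v = ∑ T, Pi.single T (v T) := (Finset.univ_sum_single v).symm
      rw [hdecv]
      refine AddSubgroup.sum_mem _ (fun T _ => ?_)
      rcases (by decide : ∀ u : ZMod 2, u = 0 ∨ u = 1) (v T) with h3 | h3
      · rw [h3, Pi.single_zero]
        exact zero_mem _
      · rw [h3]
        exact AddSubgroup.subset_closure ⟨T, rfl⟩
    calc AddSubgroup.closure (Set.range b)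
        = AddSubgroup.comap Φ.toAddMonoidHom
            (AddSubgroup.map Φ.toAddMonoidHom (AddSubgroup.closure (Set.range b))) :=
          (AddSubgroup.comap_map_eq_self_of_injective Φ.injective _).symm
      _ = ⊤ := by rw [hmap]; exact AddSubgroup.comap_top _
  · intro e he hsum T0
    have h0 := congrArg Φ hsum
    rw [map_sum, map_zero] at h0
    rw [Finset.sum_congr rfl (fun T _ => by rw [map_zsmul, hbT] :
      ∀ T ∈ Finset.univ, Φ (e T • b T) = e T • Pi.single T (1 : ZMod 2))] at h0
    have h2 := congrFun h0 T0
    rw [Finset.sum_apply] at h2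
    have h3 : ∀ T, (e T • Pi.single T (1 : ZMod 2)
          : {T : Finset (Fin n) // 2 ≤ T.card} → ZMod 2) T0
        = if T0 = T then ((e T : ℤ) : ZMod 2) else 0 := by
      intro T
      rw [Pi.smul_apply, Pi.single_apply]
      split_ifs
      · rw [zsmul_eq_mul, mul_one]
      · exact smul_zero _
    rw [Finset.sum_congr rfl (fun T _ => h3 T), Finset.sum_ite_eq,
      if_pos (Finset.mem_univ T0)] at h2
    have h5 := (ZMod.intCast_zmod_eq_zero_iff_dvd _ 2).mp h2
    rcases he T0 with h | h
    · exact h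
    · rw [h] at h5
      norm_num at h5
  · exact ⟨Φ.trans (AddEquiv.arrowCongr (Fintype.equivFinOfCardEq (card_iota n))
      (AddEquiv.refl (ZMod 2)))⟩

end SingOrbit
end

section
/- Let C₃ = ⟨a⟩ be the cyclic subgroup of order 3 of S₃ generated by a 3-cycle a, and let i : C₃ ↪ S₃ be the inclusion. Then the induction map 𝔹_i : 𝔹_{C₃} → 𝔹_{S₃} is surjective; it sends the element [a, a, a] ∈ 𝔹_{C₃} to the generator [â] of 𝔹_{S₃} ≅ ℤ/2ℤ, identifying 𝔹_i with the surjection of ℤ onto ℤ/2ℤ (where 𝔹_{C₃} ≅ ℤ is generated by [a, a, a]). -/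
namespace SingOrbit

variable (G : Type*) [Group G]

variable {G}

/-! ### Functoriality -/

variable {H : Type*} [Group H]

noncomputable def pushC (f : G →* H) : ConjClasses G → FreeAbelianGroup (NCC H) :=
  Quotient.lift (fun x : G => clsF H (f x)) <| by
    intro a b hab
    show clsF H (f a) = clsF H (f b)
    have hmk : ConjClasses.mk (f a) = ConjClasses.mk (f b) :=
      ConjClasses.mk_eq_mk_iff_isConj.mpr (f.map_isConj (hab : IsConj a b))
    rw [clsF, clsF, hmk]

lemma pushC_mk (f : G →* H) (x : G) : pushC f (ConjClasses.mk x) = clsF H (f x) := rfl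

/-- The induced map on free abelian groups. -/
noncomputable def FMap (f : G →* H) : FreeAbelianGroup (NCC G) →+ FreeAbelianGroup (NCC H) :=
  FreeAbelianGroup.lift fun c => pushC f c.1

lemma FMap_clsF (f : G →* H) (x : G) : FMap f (clsF G x) = clsF H (f x) := by
  by_cases h : ConjClasses.mk x = 1
  · have hx : x = 1 := mk_eq_one_iff.mp h
    subst hx
    have h1 : clsF G (1 : G) = 0 := by
      rw [clsF, clsC, dif_pos (mk_eq_one_iff.mpr rfl)]
    have h2 : clsF H ((f 1 : H)) = 0 := by
      rw [map_one, clsF, clsC, dif_pos (mk_eq_one_iff.mpr rfl)]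
    rw [h1, map_zero, h2]
  · have hx : clsF G x = FreeAbelianGroup.of ⟨ConjClasses.mk x, h⟩ := by
      rw [clsF, clsC, dif_neg h]
    rw [hx, FMap]
    exact FreeAbelianGroup.lift_apply_of _ _

lemma FMap_sumF (f : G →* H) (l : List G) : FMap f (sumF l) = sumF (l.map f) := by
  induction l with
  | nil => simp [sumF_nil]
  | cons a t ih =>
    rw [sumF_cons, map_add, FMap_clsF, ih, List.map_cons, sumF_cons]

lemma phi_FMap (f : G →* H) (a : FreeAbelianGroup (NCC G)) :
    phi H (FMap f a) = MonoidHom.toAdditive (Abelianization.map f) (phi G a) := by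
  have : (phi H).comp (FMap f)
      = (MonoidHom.toAdditive (Abelianization.map f)).comp (phi G) := by
    apply FreeAbelianGroup.lift_ext
    intro c
    obtain ⟨x, hx⟩ := ConjClasses.mk_surjective c.1
    simp only [AddMonoidHom.comp_apply]
    rw [show FMap f (FreeAbelianGroup.of c) = pushC f c.1 from FreeAbelianGroup.lift_apply_of _ _,
      phi_of, ← hx, pushC_mk, phi_clsF, classAb_mk]
    show Additive.ofMul (Abelianization.of (f x))
      = Additive.ofMul (Abelianization.map f (Abelianization.of x))
    rw [Abelianization.map_of]
  calc phi H (FMap f a) = ((phi H).comp (FMap f)) a := rfl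
    _ = _ := by rw [this]; rfl

lemma FMap_mem_ker (f : G →* H) {a : FreeAbelianGroup (NCC G)} (ha : a ∈ (phi G).ker) :
    FMap f a ∈ (phi H).ker := by
  rw [AddMonoidHom.mem_ker] at ha ⊢
  rw [phi_FMap, ha, map_zero]

lemma FMap_mem_NSub (f : G →* H) {a : FreeAbelianGroup (NCC G)} (ha : a ∈ NSub G) :
    FMap f a ∈ NSub H := by
  induction ha using AddSubgroup.closure_induction with
  | mem x hx =>
    obtain ⟨y, rfl⟩ := hx
    rw [map_add, FMap_clsF, FMap_clsF]
    apply AddSubgroup.subset_closure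
    exact ⟨f y, by rw [map_inv]⟩
  | zero => rw [map_zero]; exact (NSub H).zero_mem
  | add x y _ _ hx hy => rw [map_add]; exact (NSub H).add_mem hx hy
  | neg x _ hx => rw [map_neg]; exact (NSub H).neg_mem hx

noncomputable def kFMap (f : G →* H) : (phi G).ker →+ (phi H).ker :=
  AddMonoidHom.codRestrict ((FMap f).domRestrict ((phi G).ker)) _
    (fun a => FMap_mem_ker f a.2)

/-- The functorial homomorphism `𝔹_f : 𝔹_G → 𝔹_H` induced by a group homomorphism. -/
noncomputable def SODmap (f : G →* H) : SOD G →+ SOD H :=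
  QuotientAddGroup.map _ _ (kFMap f) (by
    intro x hx
    rw [AddSubgroup.mem_addSubgroupOf] at hx
    rw [AddSubgroup.mem_comap, AddSubgroup.mem_addSubgroupOf]
    exact FMap_mem_NSub f hx)

lemma SODmap_data (f : G →* H) (l : List G) (h : l.prod ∈ commutator G)
    (h' : (l.map f).prod ∈ commutator H) :
    SODmap f (data l h) = data (l.map f) h' := by
  show QuotientAddGroup.map _ _ (kFMap f) _ (QuotientAddGroup.mk _) = _
  rw [QuotientAddGroup.map_mk]
  unfold data
  congr 1
  exact Subtype.ext (FMap_sumF f l)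

lemma threeCycle_pow_three (a : Equiv.Perm (Fin 3)) (ha : a.IsThreeCycle) : a ^ 3 = 1 := by
  have h := pow_orderOf_eq_one a
  rwa [ha.orderOf] at h

open scoped commutatorElement in
lemma threeCycle_mem_commutator (a : Equiv.Perm (Fin 3)) (ha : a.IsThreeCycle) :
    a ∈ commutator (Equiv.Perm (Fin 3)) := by
  have h3 : a ^ 3 = 1 := threeCycle_pow_three a ha
  have hne : a ≠ 1 := by
    intro h
    have horder := ha.orderOf
    rw [h, orderOf_one] at horder
    exact absurd horder (by norm_num)
  have key : ∀ b : Equiv.Perm (Fin 3), b ^ 3 = 1 → b ≠ 1 →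
      ⁅Equiv.swap (0 : Fin 3) 1, b⁆ = b := by decide
  rw [← key a h3 hne, commutator_def]
  exact Subgroup.commutator_mem_commutator (Subgroup.mem_top _) (Subgroup.mem_top _)

lemma zpowers_cube_mem (a : Equiv.Perm (Fin 3)) (h3 : a ^ 3 = 1) :
    (([⟨a, Subgroup.mem_zpowers a⟩, ⟨a, Subgroup.mem_zpowers a⟩,
        ⟨a, Subgroup.mem_zpowers a⟩] : List ↥(Subgroup.zpowers a))).prod
      ∈ commutator ↥(Subgroup.zpowers a) := by
  have h1 : (([⟨a, Subgroup.mem_zpowers a⟩, ⟨a, Subgroup.mem_zpowers a⟩,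
      ⟨a, Subgroup.mem_zpowers a⟩] : List ↥(Subgroup.zpowers a))).prod = 1 := by
    apply Subtype.ext
    simp only [List.prod_cons, List.prod_nil, mul_one, MulMemClass.coe_mul,
      OneMemClass.coe_one]
    have h3' : a ^ 3 = a * a * a := by rw [pow_succ, pow_succ, pow_one]
    rw [h3'] at h3
    exact h3
  rw [h1]
  exact Subgroup.one_mem _


section Stmt18

open scoped Classical

/-- Generic evaluation of a lifted hom on `clsF`. -/
lemma lift_clsF {G : Type*} [Group G] {A : Type*} [AddCommGroup A]
    (f : ConjClasses G → A) (hf1 : f 1 = 0) (x : G) :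
    (FreeAbelianGroup.lift (fun c : NCC G => f c.1)) (clsF G x) = f (ConjClasses.mk x) := by
  by_cases h : ConjClasses.mk x = 1
  · rw [clsF, clsC, dif_pos h, map_zero, h, hf1]
  · rw [clsF, clsC, dif_neg h]
    exact FreeAbelianGroup.lift_apply_of _ _

lemma clsF_of_ne {G : Type*} [Group G] (x : G) (h : ConjClasses.mk x ≠ 1) :
    clsF G x = FreeAbelianGroup.of (⟨ConjClasses.mk x, h⟩ : NCC G) := by
  rw [clsF, clsC, dif_neg h]
  rfl

variable (a : Equiv.Perm (Fin 3))

/-- The generator of `C₃` as an element of the subgroup. -/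
def gel : ↥(Subgroup.zpowers a) := ⟨a, Subgroup.mem_zpowers a⟩

variable {a}

section Cside

variable (ha : a.IsThreeCycle)
include ha

lemma a_ne_one : a ≠ 1 := by
  intro h
  have := ha.orderOf
  rw [h, orderOf_one] at this
  norm_num at this

lemma gel_ne_one : gel a ≠ 1 := by
  intro h
  exact a_ne_one ha (congrArg Subtype.val h)

lemma gel_cube : (gel a) ^ 3 = 1 := by
  apply Subtype.ext
  show a ^ 3 = 1
  exact threeCycle_pow_three a ha

lemma orderOf_gel : orderOf (gel a) = 3 :=
  orderOf_eq_prime (gel_cube ha) (gel_ne_one ha)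

lemma gel_sq_ne_one : (gel a) ^ 2 ≠ 1 := by
  intro h
  have := orderOf_dvd_of_pow_eq_one h
  rw [orderOf_gel ha] at this
  norm_num at this

lemma gel_sq_ne_gel : (gel a) ^ 2 ≠ gel a := by
  intro h
  apply gel_ne_one ha
  have h2 : gel a * gel a = gel a * 1 := by
    rw [mul_one, ← sq, h]
  exact mul_left_cancel h2

lemma gel_inv : (gel a)⁻¹ = (gel a) ^ 2 := by
  apply inv_eq_of_mul_eq_one_right
  rw [← pow_succ']
  exact gel_cube ha

lemma mem_cases (x : ↥(Subgroup.zpowers a)) :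
    x = 1 ∨ x = gel a ∨ x = (gel a) ^ 2 := by
  obtain ⟨n, hn⟩ := Subgroup.mem_zpowers_iff.mp x.2
  have hx : x = (gel a) ^ n := by
    apply Subtype.ext
    rw [SubgroupClass.coe_zpow]
    exact hn.symm
  have h3 : (gel a) ^ (3 : ℤ) = 1 := by
    rw [show (3:ℤ) = ((3:ℕ):ℤ) from rfl, zpow_natCast]
    exact gel_cube ha
  have hmod : (gel a) ^ n = (gel a) ^ (n % 3) := by
    conv_lhs => rw [← Int.emod_add_mul_ediv n 3]
    rw [zpow_add, zpow_mul, h3, one_zpow, mul_one]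
  have hr : n % 3 = 0 ∨ n % 3 = 1 ∨ n % 3 = 2 := by omega
  rcases hr with h | h | h
  · left; rw [hx, hmod, h, zpow_zero]
  · right; left; rw [hx, hmod, h, zpow_one]
  · right; right; rw [hx, hmod, h]
    rw [show (2:ℤ) = ((2:ℕ):ℤ) from rfl, zpow_natCast]

omit ha

lemma commC (x y : ↥(Subgroup.zpowers a)) : Commute x y := by
  obtain ⟨m, hm⟩ := Subgroup.mem_zpowers_iff.mp x.2
  obtain ⟨n, hn⟩ := Subgroup.mem_zpowers_iff.mp y.2
  have hx : x = (gel a) ^ m := by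
    apply Subtype.ext; rw [SubgroupClass.coe_zpow]; exact hm.symm
  have hy : y = (gel a) ^ n := by
    apply Subtype.ext; rw [SubgroupClass.coe_zpow]; exact hn.symm
  rw [hx, hy]
  exact (Commute.refl (gel a)).zpow_zpow m n

lemma mkC_eq_iff (x y : ↥(Subgroup.zpowers a)) :
    ConjClasses.mk x = ConjClasses.mk y ↔ x = y := by
  rw [ConjClasses.mk_eq_mk_iff_isConj]
  constructor
  · intro h
    obtain ⟨c, hc⟩ := isConj_iff.mp h
    rw [← hc, (commC c x).eq, mul_inv_cancel_right]
  · rintro rfl; exact IsConj.refl _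

lemma memcomm_eq_one {x : ↥(Subgroup.zpowers a)}
    (h : x ∈ commutator ↥(Subgroup.zpowers a)) : x = 1 := by
  have hle : commutator ↥(Subgroup.zpowers a) ≤ ⊥ := by
    rw [commutator_def, Subgroup.commutator_le]
    intro g1 _ g2 _
    rw [Subgroup.mem_bot, commutatorElement_eq_one_iff_commute]
    exact commC g1 g2
  exact Subgroup.mem_bot.mp (hle h)

variable (a)

/-- Coefficient of the class of `g`. -/
noncomputable def k1 : FreeAbelianGroup (NCC ↥(Subgroup.zpowers a)) →+ ℤ :=
  FreeAbelianGroup.lift fun c => if c.1 = ConjClasses.mk (gel a) then 1 else 0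

/-- Coefficient of the class of `g²`. -/
noncomputable def k2 : FreeAbelianGroup (NCC ↥(Subgroup.zpowers a)) →+ ℤ :=
  FreeAbelianGroup.lift fun c => if c.1 = ConjClasses.mk ((gel a) ^ 2) then 1 else 0

variable {a}
include ha

lemma k1_clsF (x : ↥(Subgroup.zpowers a)) :
    k1 a (clsF _ x) = if ConjClasses.mk x = ConjClasses.mk (gel a) then 1 else 0 := by
  unfold k1
  refine lift_clsF (fun c => if c = ConjClasses.mk (gel a) then 1 else 0) ?_ x
  exact if_neg (fun h => gel_ne_one ha ((mkC_eq_iff 1 (gel a)).mp h).symm)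

lemma k2_clsF (x : ↥(Subgroup.zpowers a)) :
    k2 a (clsF _ x) = if ConjClasses.mk x = ConjClasses.mk ((gel a) ^ 2) then 1 else 0 := by
  unfold k2
  refine lift_clsF (fun c => if c = ConjClasses.mk ((gel a) ^ 2) then 1 else 0) ?_ x
  exact if_neg (fun h => gel_sq_ne_one ha ((mkC_eq_iff 1 ((gel a) ^ 2)).mp h).symm)

lemma mk_sq_ne_mk_gel : ConjClasses.mk ((gel a) ^ 2) ≠ ConjClasses.mk (gel a) := by
  intro h
  exact gel_sq_ne_gel ha ((mkC_eq_iff _ _).mp h)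

lemma coordC_s18 (x : FreeAbelianGroup (NCC ↥(Subgroup.zpowers a))) :
    x = k1 a x • clsF _ (gel a) + k2 a x • clsF _ ((gel a) ^ 2) := by
  refine FreeAbelianGroup.induction_on x ?_ ?_ ?_ ?_
  · simp
  · intro c
    obtain ⟨x0, hx0⟩ := ConjClasses.mk_surjective c.1
    have hne : c.1 ≠ 1 := c.2
    have hofc : ∀ y : ↥(Subgroup.zpowers a), x0 = y →
        FreeAbelianGroup.of c = clsF _ y := by
      rintro y rfl
      rw [clsF_of_ne x0 (hx0 ▸ hne)]
      congr 1
      exact Subtype.ext hx0.symm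
    rcases mem_cases ha x0 with h | h | h
    · exfalso
      apply hne
      rw [← hx0, h]
      exact mk_eq_one_iff.mpr rfl
    · rw [hofc _ h, k1_clsF ha, k2_clsF ha, if_pos rfl,
        if_neg (fun hh => mk_sq_ne_mk_gel ha hh.symm), one_smul, zero_smul, add_zero]
    · rw [hofc _ h, k1_clsF ha, k2_clsF ha, if_neg (mk_sq_ne_mk_gel ha),
        if_pos rfl, one_smul, zero_smul, zero_add]
  · intro c hc
    rw [map_neg, map_neg, neg_zsmul, neg_zsmul, ← neg_add]
    exact congrArg Neg.neg hc
  · intro y z hy hz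
    rw [map_add, map_add, add_zsmul, add_zsmul]
    calc y + z = (k1 a y • clsF _ (gel a) + k2 a y • clsF _ ((gel a) ^ 2))
        + (k1 a z • clsF _ (gel a) + k2 a z • clsF _ ((gel a) ^ 2)) := by
          rw [← hy, ← hz]
      _ = _ := by abel

lemma dvd3 {x : FreeAbelianGroup (NCC ↥(Subgroup.zpowers a))}
    (hx : x ∈ (phi ↥(Subgroup.zpowers a)).ker) : (3:ℤ) ∣ k1 a x - k2 a x := by
  have hphi : phi _ x
      = Additive.ofMul (Abelianization.of ((gel a) ^ (k1 a x + k2 a x * 2))) := by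
    conv_lhs => rw [coordC_s18 ha x]
    rw [map_add, map_zsmul, map_zsmul, phi_clsF, phi_clsF, map_pow, ofMul_pow,
      map_zpow, ofMul_zpow, ← natCast_zsmul, Nat.cast_ofNat, smul_smul, ← add_zsmul]
  rw [AddMonoidHom.mem_ker, hphi, ofMul_eq_zero, abOf_eq_one_iff] at hx
  have h1 : (gel a) ^ (k1 a x + k2 a x * 2) = 1 := memcomm_eq_one hx
  have h2 : ((orderOf (gel a) : ℤ)) ∣ k1 a x + k2 a x * 2 :=
    orderOf_dvd_iff_zpow_eq_one.mpr h1
  rw [orderOf_gel ha] at h2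
  omega

lemma k12_NSub {x : FreeAbelianGroup (NCC ↥(Subgroup.zpowers a))}
    (hx : x ∈ NSub ↥(Subgroup.zpowers a)) : k1 a x = k2 a x := by
  induction hx using AddSubgroup.closure_induction with
  | mem y hy =>
    obtain ⟨z, rfl⟩ := hy
    rw [map_add, map_add, k1_clsF ha, k1_clsF ha, k2_clsF ha, k2_clsF ha]
    have hn1 : ConjClasses.mk (1 : ↥(Subgroup.zpowers a)) ≠ ConjClasses.mk (gel a) :=
      fun h => gel_ne_one ha ((mkC_eq_iff _ _).mp h).symm
    have hn2 : ConjClasses.mk (1 : ↥(Subgroup.zpowers a))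
        ≠ ConjClasses.mk ((gel a) ^ 2) :=
      fun h => gel_sq_ne_one ha ((mkC_eq_iff _ _).mp h).symm
    rcases mem_cases ha z with h | h | h
    · subst h
      rw [inv_one, if_neg hn1, if_neg hn2]
    · subst h
      rw [gel_inv ha, if_pos rfl, if_pos rfl,
        if_neg (mk_sq_ne_mk_gel ha), if_neg (fun hh => mk_sq_ne_mk_gel ha hh.symm)]
      ring
    · subst h
      have hinv : ((gel a) ^ 2)⁻¹ = gel a := by
        rw [← gel_inv ha, inv_inv]
      rw [hinv, if_pos rfl, if_pos rfl, if_neg (mk_sq_ne_mk_gel ha),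
        if_neg (fun hh => mk_sq_ne_mk_gel ha hh.symm)]
      ring
  | zero => rw [map_zero, map_zero]
  | add y z _ _ hy hz => rw [map_add, map_add, hy, hz]
  | neg y _ hy => rw [map_neg, map_neg, hy]

/-- The homomorphism `ker φ → ℤ`, `x ↦ (k1 x - k2 x)/3`. -/
noncomputable def psiC : ((phi ↥(Subgroup.zpowers a)).ker) →+ ℤ :=
  AddMonoidHom.mk' (fun x => (k1 a x.1 - k2 a x.1) / 3) (by
    intro x y
    have d1 := dvd3 ha x.2
    have d2 := dvd3 ha y.2
    have hc : k1 a ((x + y : (phi ↥(Subgroup.zpowers a)).ker) : FreeAbelianGroup _)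
        = k1 a x.1 + k1 a y.1 := by
      rw [AddSubgroup.coe_add, map_add]
    have hc2 : k2 a ((x + y : (phi ↥(Subgroup.zpowers a)).ker) : FreeAbelianGroup _)
        = k2 a x.1 + k2 a y.1 := by
      rw [AddSubgroup.coe_add, map_add]
    show (k1 a ((x + y : (phi ↥(Subgroup.zpowers a)).ker) : FreeAbelianGroup _)
        - k2 a ((x + y : (phi ↥(Subgroup.zpowers a)).ker) : FreeAbelianGroup _)) / 3
      = (k1 a x.1 - k2 a x.1) / 3 + (k1 a y.1 - k2 a y.1) / 3
    rw [hc, hc2]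
    omega)

lemma psiC_apply (x : (phi ↥(Subgroup.zpowers a)).ker) :
    psiC ha x = (k1 a x.1 - k2 a x.1) / 3 := rfl

noncomputable def ebar : SOD ↥(Subgroup.zpowers a) →+ ℤ :=
  QuotientAddGroup.lift _ (psiC ha) (by
    intro x hx
    rw [AddSubgroup.mem_addSubgroupOf] at hx
    rw [AddMonoidHom.mem_ker, psiC_apply, k12_NSub ha hx]
    simp)

end Cside


section Sside

variable (ha : a.IsThreeCycle)

/-- The transposition `(0 1)`. -/
def tau : Equiv.Perm (Fin 3) := Equiv.swap 0 1

lemma tau_ne_one : tau ≠ 1 := by decide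

lemma tau_inv : tau⁻¹ = tau := by decide

lemma sign_tau : Equiv.Perm.sign tau = -1 := by decide

lemma class2 : ∀ x : Equiv.Perm (Fin 3), x * x = 1 → x ≠ 1 →
    ∃ c, c * tau * c⁻¹ = x := by decide

lemma class3 : ∀ x y : Equiv.Perm (Fin 3), x ^ 3 = 1 → x ≠ 1 → y ^ 3 = 1 → y ≠ 1 →
    ∃ c, c * x * c⁻¹ = y := by decide

lemma classall : ∀ x : Equiv.Perm (Fin 3), x * x = 1 ∨ x ^ 3 = 1 := by decide

lemma mk_inv_mk {G : Type*} [Group G] {u v : G}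
    (h : ConjClasses.mk u = ConjClasses.mk v) :
    ConjClasses.mk u⁻¹ = ConjClasses.mk v⁻¹ := by
  rw [ConjClasses.mk_eq_mk_iff_isConj] at h ⊢
  obtain ⟨c, hc⟩ := isConj_iff.mp h
  refine isConj_iff.mpr ⟨c, ?_⟩
  rw [← hc]
  simp [mul_inv_rev, mul_assoc]

lemma sign_eq_of_mk_eq {x y : Equiv.Perm (Fin 3)}
    (h : ConjClasses.mk x = ConjClasses.mk y) :
    Equiv.Perm.sign x = Equiv.Perm.sign y :=
  isConj_iff_eq.mp ((Equiv.Perm.sign).map_isConj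
    (ConjClasses.mk_eq_mk_iff_isConj.mp h))

include ha

lemma conj_cases (x : Equiv.Perm (Fin 3)) : x = 1 ∨ IsConj tau x ∨ IsConj a x := by
  by_cases h1 : x = 1
  · left; exact h1
  rcases classall x with h | h
  · right; left; exact isConj_iff.mpr (class2 x h h1)
  · right; right
    exact isConj_iff.mpr
      (class3 a x (threeCycle_pow_three a ha) (a_ne_one ha) h h1)

lemma mk_inv_a : ConjClasses.mk a⁻¹ = ConjClasses.mk a := by
  rw [ConjClasses.mk_eq_mk_iff_isConj]
  refine isConj_iff.mpr (class3 a⁻¹ a ?_ ?_ ?_ ?_)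
  · rw [inv_pow, threeCycle_pow_three a ha, inv_one]
  · exact inv_ne_one.mpr (a_ne_one ha)
  · exact threeCycle_pow_three a ha
  · exact a_ne_one ha

lemma mk_tau_ne_mk_a : ConjClasses.mk tau ≠ ConjClasses.mk a := by
  intro h
  have h2 := sign_eq_of_mk_eq h
  rw [sign_tau, ha.sign] at h2
  exact absurd h2 (by decide)

omit ha

lemma mk_tau_ne_one : ConjClasses.mk tau ≠ 1 := by
  intro h
  exact tau_ne_one (mk_eq_one_iff.mp h)

include ha

lemma mk_a_ne_one : ConjClasses.mk a ≠ 1 := by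
  intro h
  exact a_ne_one ha (mk_eq_one_iff.mp h)

lemma clsF_inv_a : clsF (Equiv.Perm (Fin 3)) a⁻¹ = clsF (Equiv.Perm (Fin 3)) a :=
  congrArg (clsC (Equiv.Perm (Fin 3))) (mk_inv_a ha)

omit ha
variable (a)

/-- Coefficient of the class of the transposition. -/
noncomputable def kt : FreeAbelianGroup (NCC (Equiv.Perm (Fin 3))) →+ ℤ :=
  FreeAbelianGroup.lift fun c => if c.1 = ConjClasses.mk tau then 1 else 0

/-- Coefficient of the class of the 3-cycle. -/
noncomputable def kA : FreeAbelianGroup (NCC (Equiv.Perm (Fin 3))) →+ ℤ :=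
  FreeAbelianGroup.lift fun c => if c.1 = ConjClasses.mk a then 1 else 0

/-- The mod-two count of 3-cycle classes. -/
noncomputable def wS : FreeAbelianGroup (NCC (Equiv.Perm (Fin 3))) →+ ZMod 2 :=
  FreeAbelianGroup.lift fun c => if c.1 = ConjClasses.mk a then 1 else 0

variable {a}

lemma kt_clsF (x : Equiv.Perm (Fin 3)) :
    kt (clsF _ x) = if ConjClasses.mk x = ConjClasses.mk tau then 1 else 0 := by
  unfold kt
  refine lift_clsF (fun c => if c = ConjClasses.mk tau then 1 else 0) ?_ x
  exact if_neg (fun h => mk_tau_ne_one h.symm)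

include ha

lemma kA_clsF (x : Equiv.Perm (Fin 3)) :
    kA a (clsF _ x) = if ConjClasses.mk x = ConjClasses.mk a then 1 else 0 := by
  unfold kA
  refine lift_clsF (fun c => if c = ConjClasses.mk a then 1 else 0) ?_ x
  exact if_neg (fun h => mk_a_ne_one ha h.symm)

lemma wS_clsF (x : Equiv.Perm (Fin 3)) :
    wS a (clsF _ x) = if ConjClasses.mk x = ConjClasses.mk a then 1 else 0 := by
  unfold wS
  refine lift_clsF (fun c => if c = ConjClasses.mk a then 1 else 0) ?_ x
  exact if_neg (fun h => mk_a_ne_one ha h.symm)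

lemma coordS (x : FreeAbelianGroup (NCC (Equiv.Perm (Fin 3)))) :
    x = kt x • clsF _ tau + kA a x • clsF _ a := by
  refine FreeAbelianGroup.induction_on x ?_ ?_ ?_ ?_
  · simp
  · intro c
    obtain ⟨x0, hx0⟩ := ConjClasses.mk_surjective c.1
    have hne : c.1 ≠ 1 := c.2
    have hofc : ∀ y : Equiv.Perm (Fin 3), ConjClasses.mk y = c.1 → y ≠ 1 →
        FreeAbelianGroup.of c = clsF _ y := by
      intro y hy hy1
      rw [clsF_of_ne y (hy ▸ hne)]
      congr 1
      exact Subtype.ext hy.symm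
    rcases conj_cases ha x0 with h | h | h
    · exfalso
      apply hne
      rw [← hx0, h]
      exact mk_eq_one_iff.mpr rfl
    · have hmk : ConjClasses.mk tau = c.1 :=
        (ConjClasses.mk_eq_mk_iff_isConj.mpr h).trans hx0
      rw [hofc tau hmk tau_ne_one, kt_clsF, kA_clsF ha, if_pos rfl,
        if_neg (mk_tau_ne_mk_a ha), one_smul, zero_smul, add_zero]
    · have hmk : ConjClasses.mk a = c.1 :=
        (ConjClasses.mk_eq_mk_iff_isConj.mpr h).trans hx0
      rw [hofc a hmk (a_ne_one ha), kt_clsF, kA_clsF ha,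
        if_neg (fun hh => mk_tau_ne_mk_a ha hh.symm), if_pos rfl,
        one_smul, zero_smul, zero_add]
  · intro c hc
    rw [map_neg, map_neg, neg_zsmul, neg_zsmul, ← neg_add]
    exact congrArg Neg.neg hc
  · intro y z hy hz
    rw [map_add, map_add, add_zsmul, add_zsmul]
    calc y + z = (kt y • clsF _ tau + kA a y • clsF _ a)
        + (kt z • clsF _ tau + kA a z • clsF _ a) := by rw [← hy, ← hz]
      _ = _ := by abel

omit ha in
lemma sign_commutator {z : Equiv.Perm (Fin 3)}
    (hz : z ∈ commutator (Equiv.Perm (Fin 3))) : Equiv.Perm.sign z = 1 := by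
  have hle : commutator (Equiv.Perm (Fin 3)) ≤ (Equiv.Perm.sign).ker := by
    rw [commutator_def, Subgroup.commutator_le]
    intro g1 _ g2 _
    rw [MonoidHom.mem_ker, map_commutatorElement]
    exact commutatorElement_eq_one_iff_commute.mpr (Commute.all _ _)
  exact hle hz

lemma even_kt {x : FreeAbelianGroup (NCC (Equiv.Perm (Fin 3)))}
    (hx : x ∈ (phi (Equiv.Perm (Fin 3))).ker) : (2:ℤ) ∣ kt x := by
  have hphi : phi _ x
      = Additive.ofMul (Abelianization.of (tau ^ kt x * a ^ kA a x)) := by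
    conv_lhs => rw [coordS ha x]
    rw [map_add, map_zsmul, map_zsmul, phi_clsF, phi_clsF, map_mul, map_zpow,
      map_zpow, ofMul_mul, ofMul_zpow, ofMul_zpow]
  rw [AddMonoidHom.mem_ker, hphi, ofMul_eq_zero, abOf_eq_one_iff] at hx
  have hs := sign_commutator hx
  rw [map_mul, map_zpow, map_zpow, sign_tau, ha.sign, one_zpow, mul_one] at hs
  rcases Int.even_or_odd (kt x) with ⟨k, hk⟩ | ⟨k, hk⟩
  · exact ⟨k, by omega⟩
  · exfalso
    rw [hk, zpow_add, zpow_one, zpow_mul] at hs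
    have h2 : (-1 : ℤˣ) ^ (2:ℤ) = 1 := by decide
    rw [h2, one_zpow, one_mul] at hs
    exact absurd hs (by decide)

lemma wS_NSub {x : FreeAbelianGroup (NCC (Equiv.Perm (Fin 3)))}
    (hx : x ∈ NSub (Equiv.Perm (Fin 3))) : wS a x = 0 := by
  induction hx using AddSubgroup.closure_induction with
  | mem y hy =>
    obtain ⟨z, rfl⟩ := hy
    rw [map_add, wS_clsF ha, wS_clsF ha]
    by_cases h : ConjClasses.mk z = ConjClasses.mk a
    · have h2 : ConjClasses.mk z⁻¹ = ConjClasses.mk a :=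
        (mk_inv_mk h).trans (mk_inv_a ha)
      rw [if_pos h, if_pos h2]
      decide
    · have h2 : ConjClasses.mk z⁻¹ ≠ ConjClasses.mk a := by
        intro hc
        apply h
        have := (mk_inv_mk hc).trans (mk_inv_a ha)
        rwa [inv_inv] at this
      rw [if_neg h, if_neg h2, add_zero]
  | zero => rw [map_zero]
  | add y z _ _ hy hz => rw [map_add, hy, hz, add_zero]
  | neg y _ hy => rw [map_neg, hy, neg_zero]

/-- `wS` descends to `𝔹_{S₃}`. -/
noncomputable def wbar (ha : a.IsThreeCycle) : SOD (Equiv.Perm (Fin 3)) →+ ZMod 2 :=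
  QuotientAddGroup.lift _ ((wS a).comp (AddSubgroup.subtype _)) (by
    intro x hx
    rw [AddSubgroup.mem_addSubgroupOf] at hx
    rw [AddMonoidHom.mem_ker, AddMonoidHom.comp_apply]
    exact wS_NSub ha hx)

omit ha

/-- Two data with difference in `N` are equal. -/
lemma data_eq_of {G : Type*} [Group G] (l l' : List G)
    (h : l.prod ∈ commutator G) (h' : l'.prod ∈ commutator G)
    (hs : sumF l - sumF l' ∈ NSub G) : data l h = data l' h' := by
  unfold data
  refine QuotientAddGroup.eq_iff_sub_mem.mpr ?_
  rw [AddSubgroup.mem_addSubgroupOf]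
  exact hs

lemma data_eq_zero_of {G : Type*} [Group G] (l : List G)
    (h : l.prod ∈ commutator G) (hs : sumF l ∈ NSub G) : data l h = 0 := by
  unfold data
  refine (QuotientAddGroup.eq_zero_iff _).mpr ?_
  rw [AddSubgroup.mem_addSubgroupOf]
  exact hs

include ha

lemma double_a_mem : sumF [a] + sumF [a] ∈ NSub (Equiv.Perm (Fin 3)) := by
  rw [sumF_cons, sumF_nil, add_zero]
  apply AddSubgroup.subset_closure
  exact ⟨a, by rw [clsF_inv_a ha]⟩

omit ha

lemma smul_tau_mem {m : ℤ} (hm : (2:ℤ) ∣ m) :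
    m • clsF (Equiv.Perm (Fin 3)) tau ∈ NSub (Equiv.Perm (Fin 3)) := by
  obtain ⟨k, rfl⟩ := hm
  have heq : (2 * k) • clsF (Equiv.Perm (Fin 3)) tau
      = k • (clsF (Equiv.Perm (Fin 3)) tau + clsF (Equiv.Perm (Fin 3)) tau⁻¹) := by
    rw [tau_inv, ← two_zsmul, smul_smul, mul_comm]
  rw [heq]
  refine AddSubgroup.zsmul_mem _ (AddSubgroup.subset_closure ?_) k
  exact ⟨tau, rfl⟩

end Sside

end Stmt18

set_option maxHeartbeats 1000000 in
/-- for the inclusion `i : C₃ = ⟨a⟩ ↪ S₃` (`a` a 3-cycle), the induction map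
`𝔹_i : 𝔹_{C₃} → 𝔹_{S₃}` is surjective; it sends `[a, a, a]` to the generator `[â]` of
`𝔹_{S₃} ≅ ℤ/2ℤ`, and `𝔹_{C₃} ≅ ℤ` is generated by `[a, a, a]`. -/
theorem stmt18 (a : Equiv.Perm (Fin 3)) (ha : a.IsThreeCycle)
    (d3 : SOD ↥(Subgroup.zpowers a)) (d1 : SOD (Equiv.Perm (Fin 3)))
    (hd3 : d3 = data [⟨a, Subgroup.mem_zpowers a⟩, ⟨a, Subgroup.mem_zpowers a⟩,
      ⟨a, Subgroup.mem_zpowers a⟩] (zpowers_cube_mem a (threeCycle_pow_three a ha)))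
    (hd1 : d1 = data [a]
      (by rw [List.prod_singleton]; exact threeCycle_mem_commutator a ha)) :
    Function.Surjective (SODmap (Subgroup.zpowers a).subtype) ∧
    SODmap (Subgroup.zpowers a).subtype d3 = d1 ∧
    AddSubgroup.closure {d1} = ⊤ ∧
    addOrderOf d1 = 2 ∧
    ∃ e : SOD ↥(Subgroup.zpowers a) ≃+ ℤ, e d3 = 1 := by
  subst hd3
  subst hd1
  have h3prod := zpowers_cube_mem a (threeCycle_pow_three a ha)
  have h1prod : ([a]).prod ∈ commutator (Equiv.Perm (Fin 3)) := by
    rw [List.prod_singleton]; exact threeCycle_mem_commutator a ha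
  -- the image of `[a,a,a]` under the induced map is `[â]`
  have hmem : ((([⟨a, Subgroup.mem_zpowers a⟩, ⟨a, Subgroup.mem_zpowers a⟩,
      ⟨a, Subgroup.mem_zpowers a⟩] : List ↥(Subgroup.zpowers a)).map
        (Subgroup.zpowers a).subtype).prod) ∈ commutator (Equiv.Perm (Fin 3)) := by
    show ([a, a, a] : List (Equiv.Perm (Fin 3))).prod ∈ _
    have hprod : ([a, a, a] : List (Equiv.Perm (Fin 3))).prod = 1 := by
      have h := threeCycle_pow_three a ha
      rw [pow_succ', pow_succ', pow_one] at h
      rw [List.prod_cons, List.prod_cons, List.prod_singleton]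
      exact h
    rw [hprod]
    exact Subgroup.one_mem _
  have hmap : SODmap (Subgroup.zpowers a).subtype
      (data [⟨a, Subgroup.mem_zpowers a⟩, ⟨a, Subgroup.mem_zpowers a⟩,
        ⟨a, Subgroup.mem_zpowers a⟩] h3prod) = data [a] h1prod := by
    rw [SODmap_data _ _ _ hmem]
    refine data_eq_of _ _ _ _ ?_
    have hs : sumF (([⟨a, Subgroup.mem_zpowers a⟩, ⟨a, Subgroup.mem_zpowers a⟩,
        ⟨a, Subgroup.mem_zpowers a⟩] : List ↥(Subgroup.zpowers a)).map
          (Subgroup.zpowers a).subtype) - sumF [a] = sumF [a] + sumF [a] := by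
      show sumF [a, a, a] - sumF [a] = sumF [a] + sumF [a]
      simp only [sumF_cons, sumF_nil]
      abel
    rw [hs]
    exact double_a_mem ha
  -- `[â]` has order two
  have hval1 : wbar ha (data [a] h1prod) = 1 := by
    show wS a (sumF [a]) = 1
    rw [sumF_cons, sumF_nil, add_zero, wS_clsF ha, if_pos rfl]
  have hne1 : data [a] h1prod ≠ 0 := by
    intro h
    rw [h, map_zero] at hval1
    exact absurd hval1.symm (by decide)
  have h2d1 : 2 • data [a] h1prod = 0 := by
    rw [two_smul]
    show QuotientAddGroup.mk ((⟨sumF [a], sumF_mem_ker h1prod⟩ : ((phi (Equiv.Perm (Fin 3))).ker))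
        + ⟨sumF [a], sumF_mem_ker h1prod⟩) = 0
    rw [QuotientAddGroup.eq_zero_iff, AddSubgroup.mem_addSubgroupOf]
    show sumF [a] + sumF [a] ∈ _
    exact double_a_mem ha
  have horder : addOrderOf (data [a] h1prod) = 2 := addOrderOf_eq_prime h2d1 hne1
  -- `[â]` generates
  have hclos : AddSubgroup.closure {data [a] h1prod} = ⊤ := by
    rw [eq_top_iff]
    rintro z -
    refine QuotientAddGroup.induction_on z ?_
    intro x
    have hev := even_kt ha x.2
    have key : (QuotientAddGroup.mk x : SOD (Equiv.Perm (Fin 3)))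
        = kA a x.1 • data [a] h1prod := by
      show (QuotientAddGroup.mk x : ((phi (Equiv.Perm (Fin 3))).ker ⧸ ((NSub (Equiv.Perm (Fin 3))).addSubgroupOf (phi (Equiv.Perm (Fin 3))).ker))) = kA a x.1 • (QuotientAddGroup.mk (⟨sumF [a], sumF_mem_ker h1prod⟩
        : ((phi (Equiv.Perm (Fin 3))).ker)) : ((phi (Equiv.Perm (Fin 3))).ker ⧸ ((NSub (Equiv.Perm (Fin 3))).addSubgroupOf (phi (Equiv.Perm (Fin 3))).ker)))
      rw [← QuotientAddGroup.mk_zsmul, QuotientAddGroup.eq_iff_sub_mem,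
        AddSubgroup.mem_addSubgroupOf]
      show x.1 - kA a x.1 • sumF [a] ∈ _
      have hdiff : x.1 - kA a x.1 • sumF [a] = kt x.1 • clsF _ tau := by
        rw [sumF_cons, sumF_nil, add_zero, sub_eq_iff_eq_add]
        exact coordS ha x.1
      rw [hdiff]
      exact smul_tau_mem hev
    rw [key]
    exact AddSubgroup.zsmul_mem _ (AddSubgroup.subset_closure (Set.mem_singleton _)) _
  -- surjectivity of the induced map
  have hsurj : Function.Surjective (SODmap (Subgroup.zpowers a).subtype) := by
    rw [← AddMonoidHom.range_eq_top, eq_top_iff, ← hclos]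
    refine (AddSubgroup.closure_le _).mpr ?_
    rintro y hy
    rw [Set.mem_singleton_iff] at hy
    subst hy
    exact ⟨_, hmap⟩
  -- the isomorphism with ℤ
  have hval3 : ebar ha (data [⟨a, Subgroup.mem_zpowers a⟩, ⟨a, Subgroup.mem_zpowers a⟩,
      ⟨a, Subgroup.mem_zpowers a⟩] h3prod) = 1 := by
    show (k1 a (sumF [⟨a, Subgroup.mem_zpowers a⟩, ⟨a, Subgroup.mem_zpowers a⟩,
      ⟨a, Subgroup.mem_zpowers a⟩]) - k2 a (sumF [⟨a, Subgroup.mem_zpowers a⟩,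
        ⟨a, Subgroup.mem_zpowers a⟩, ⟨a, Subgroup.mem_zpowers a⟩])) / 3 = 1
    have hne2 : ConjClasses.mk (gel a) ≠ ConjClasses.mk ((gel a) ^ 2) :=
      fun hh => mk_sq_ne_mk_gel ha hh.symm
    rw [sumF_cons, sumF_cons, sumF_cons, sumF_nil]
    simp only [add_zero, map_add, k1_clsF ha, k2_clsF ha,
      show (⟨a, Subgroup.mem_zpowers a⟩ : ↥(Subgroup.zpowers a)) = gel a from rfl, if_true]
    rw [if_neg hne2]
    norm_num
  have hinj : Function.Injective (ebar ha) := by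
    rw [injective_iff_map_eq_zero]
    intro z
    refine QuotientAddGroup.induction_on z ?_
    intro x hz
    have hz' : (k1 a x.1 - k2 a x.1) / 3 = 0 := hz
    have hd := dvd3 ha x.2
    have heq : k1 a x.1 = k2 a x.1 := by omega
    refine (QuotientAddGroup.eq_zero_iff _).mpr ?_
    rw [AddSubgroup.mem_addSubgroupOf]
    have hco := coordC_s18 ha x.1
    rw [heq] at hco
    have hmem' : x.1 = k2 a x.1 • (clsF _ (gel a) + clsF _ (gel a)⁻¹) := by
      rw [smul_add, gel_inv ha]
      exact hco
    rw [hmem']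
    refine AddSubgroup.zsmul_mem _ (AddSubgroup.subset_closure ?_) _
    exact ⟨gel a, rfl⟩
  have hsurjZ : Function.Surjective (ebar ha) := by
    intro k
    refine ⟨k • data [⟨a, Subgroup.mem_zpowers a⟩, ⟨a, Subgroup.mem_zpowers a⟩,
      ⟨a, Subgroup.mem_zpowers a⟩] h3prod, ?_⟩
    rw [map_zsmul, hval3, smul_eq_mul, mul_one]
  exact ⟨hsurj, hmap, hclos, horder,
    ⟨AddEquiv.ofBijective (ebar ha) ⟨hinj, hsurjZ⟩, hval3⟩⟩

end SingOrbit
end
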